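/- For every ε ∈ (0, 2/9], the vector λ = (ε/2, ε/2, 1/4 − ε/8, 1/4 − ε/8, 1/2 − 3ε/4) satisfies NCOND for the 5-cycle with edges {1,2},{1,3},{2,4},{3,5},{4,5}, yet λ₅ ≥ a·α̃, where a = λ₃(λ₁+λ₄)/(λ₁+λ₄−λ₂) + λ₄(λ₂+λ₃)/(λ₂+λ₃−λ₁) and α̃ = [1 + λ₁/(λ₂+λ₃−λ₁) + λ₂/(λ₁+λ₄−λ₂)]⁻¹. More precisely, λ₅ − aα̃ = (ε/8)(1 − 9ε/2)/(1/4 + 7ε/8) ≥ 0. -/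

import Mathlib

open Finset

open Classical in
/-- Neighborhood of a finite set `A` of vertices. -/
noncomputable def nbrSet {V : Type*} [Fintype V] (G : SimpleGraph V) (A : Finset V) : Finset V :=
  Finset.univ.filter (fun j => ∃ i ∈ A, G.Adj i j)

/-- An independent set: a nonempty set of pairwise non-adjacent vertices. -/
def IsIndepSet {V : Type*} (G : SimpleGraph V) (I : Finset V) : Prop :=
  I.Nonempty ∧ ∀ i ∈ I, ∀ j ∈ I, ¬ G.Adj i j

/-- NCOND. -/
def NCond {V : Type*} [Fintype V] (G : SimpleGraph V) (lam : V → ℝ) : Prop :=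
  ∀ I : Finset V, IsIndepSet G I → ∑ i ∈ I, lam i < ∑ j ∈ nbrSet G I, lam j

/-- The 5-cycle on vertices `0,…,4` (paper labels `1,…,5`), with edges
`{0,1}, {0,2}, {1,3}, {2,4}, {3,4}`. -/
def fiveCycle : SimpleGraph (Fin 5) :=
  SimpleGraph.fromRel (fun a b =>
    (a = 0 ∧ b = 1) ∨ (a = 0 ∧ b = 2) ∨ (a = 1 ∧ b = 3) ∨ (a = 2 ∧ b = 4) ∨ (a = 3 ∧ b = 4))

instance : DecidableRel fiveCycle.Adj := fun a b =>
  decidable_of_iff (a ≠ b ∧ (((a = 0 ∧ b = 1) ∨ (a = 0 ∧ b = 2) ∨ (a = 1 ∧ b = 3) ∨ (a = 2 ∧ b = 4) ∨ (a = 3 ∧ b = 4)) ∨ ((b = 0 ∧ a = 1) ∨ (b = 0 ∧ a = 2) ∨ (b = 1 ∧ a = 3) ∨ (b = 2 ∧ a = 4) ∨ (b = 3 ∧ a = 4)))) (by rw [fiveCycle, SimpleGraph.fromRel_adj])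

lemma indep_classify : ∀ I : Finset (Fin 5), IsIndepSet fiveCycle I →
    I = {0} ∨ I = {1} ∨ I = {2} ∨ I = {3} ∨ I = {4} ∨
    I = {0,3} ∨ I = {0,4} ∨ I = {1,2} ∨ I = {1,4} ∨ I = {2,3} := by
  unfold IsIndepSet
  decide

lemma mem_nbrSet {V : Type*} [Fintype V] (G : SimpleGraph V) (A : Finset V) (j : V) :
    j ∈ nbrSet G A ↔ ∃ i ∈ A, G.Adj i j := by
  classical simp [nbrSet]

lemma nb0 : nbrSet fiveCycle {0} = {1,2} := by
  ext j; rw [mem_nbrSet]; fin_cases j <;> simp [fiveCycle, SimpleGraph.fromRel_adj]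
lemma nb1 : nbrSet fiveCycle {1} = {0,3} := by
  ext j; rw [mem_nbrSet]; fin_cases j <;> simp [fiveCycle, SimpleGraph.fromRel_adj]
lemma nb2 : nbrSet fiveCycle {2} = {0,4} := by
  ext j; rw [mem_nbrSet]; fin_cases j <;> simp [fiveCycle, SimpleGraph.fromRel_adj]
lemma nb3 : nbrSet fiveCycle {3} = {1,4} := by
  ext j; rw [mem_nbrSet]; fin_cases j <;> simp [fiveCycle, SimpleGraph.fromRel_adj]
lemma nb4 : nbrSet fiveCycle {4} = {2,3} := by
  ext j; rw [mem_nbrSet]; fin_cases j <;> simp [fiveCycle, SimpleGraph.fromRel_adj]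
lemma nb03 : nbrSet fiveCycle {0,3} = {1,2,4} := by
  ext j; rw [mem_nbrSet]; fin_cases j <;> simp [fiveCycle, SimpleGraph.fromRel_adj]
lemma nb04 : nbrSet fiveCycle {0,4} = {1,2,3} := by
  ext j; rw [mem_nbrSet]; fin_cases j <;> simp [fiveCycle, SimpleGraph.fromRel_adj]
lemma nb12 : nbrSet fiveCycle {1,2} = {0,3,4} := by
  ext j; rw [mem_nbrSet]; fin_cases j <;> simp [fiveCycle, SimpleGraph.fromRel_adj]
lemma nb14 : nbrSet fiveCycle {1,4} = {0,2,3} := by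
  ext j; rw [mem_nbrSet]; fin_cases j <;> simp [fiveCycle, SimpleGraph.fromRel_adj]
lemma nb23 : nbrSet fiveCycle {2,3} = {0,1,4} := by
  ext j; rw [mem_nbrSet]; fin_cases j <;> simp [fiveCycle, SimpleGraph.fromRel_adj]

/-- for every `ε ∈ (0, 2/9]`, the vector
`λ = (ε/2, ε/2, 1/4 − ε/8, 1/4 − ε/8, 1/2 − 3ε/4)` satisfies NCOND for the 5-cycle,
yet `λ₅ − a·α̃ = (ε/8)(1 − 9ε/2)/(1/4 + 7ε/8) ≥ 0`. -/
theorem fiveCycle_ncond_not_sufficient (ε : ℝ) (hε0 : 0 < ε) (hε : ε ≤ 2 / 9)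
    (lam : Fin 5 → ℝ)
    (hlam : lam = ![ε / 2, ε / 2, 1 / 4 - ε / 8, 1 / 4 - ε / 8, 1 / 2 - 3 * ε / 4])
    (a αt : ℝ)
    (ha : a = lam 2 * (lam 0 + lam 3) / (lam 0 + lam 3 - lam 1)
        + lam 3 * (lam 1 + lam 2) / (lam 1 + lam 2 - lam 0))
    (hαt : αt = (1 + lam 0 / (lam 1 + lam 2 - lam 0) + lam 1 / (lam 0 + lam 3 - lam 1))⁻¹) :
    NCond fiveCycle lam ∧
    lam 4 - a * αt = (ε / 8) * (1 - 9 * ε / 2) / (1 / 4 + 7 * ε / 8) ∧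
    0 ≤ lam 4 - a * αt := by
  have l0 : lam 0 = ε / 2 := by rw [hlam]; rfl
  have l1 : lam 1 = ε / 2 := by rw [hlam]; rfl
  have l2 : lam 2 = 1 / 4 - ε / 8 := by rw [hlam]; rfl
  have l3 : lam 3 = 1 / 4 - ε / 8 := by rw [hlam]; rfl
  have l4 : lam 4 = 1 / 2 - 3 * ε / 4 := by rw [hlam]; rfl
  have e1 : (0:ℝ) < 1 / 4 - ε / 8 := by linarith
  have e2 : (0:ℝ) < 1 / 4 + 7 * ε / 8 := by linarith
  have hne1 : (1 / 4 : ℝ) - ε / 8 ≠ 0 := ne_of_gt e1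
  have hne2 : (1 / 4 : ℝ) + 7 * ε / 8 ≠ 0 := ne_of_gt e2
  have hd1 : lam 1 + lam 2 - lam 0 = 1 / 4 - ε / 8 := by rw [l0, l1, l2]; ring
  have hd2 : lam 0 + lam 3 - lam 1 = 1 / 4 - ε / 8 := by rw [l0, l1, l3]; ring
  have ha' : a = 1 / 2 + 3 * ε / 4 := by
    rw [ha, hd1, hd2, l0, l1, l2, l3, ← add_div, div_eq_iff hne1]
    ring
  have hα' : αt = (1 / 4 - ε / 8) / (1 / 4 + 7 * ε / 8) := by
    rw [hαt, hd1, hd2, l0, l1]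
    rw [show (1 : ℝ) + ε / 2 / (1 / 4 - ε / 8) + ε / 2 / (1 / 4 - ε / 8)
        = (1 / 4 + 7 * ε / 8) / (1 / 4 - ε / 8) by
          rw [eq_div_iff hne1, add_mul, add_mul, div_mul_cancel₀ _ hne1]; ring]
    rw [inv_div]
  have key : lam 4 - a * αt = (ε / 8) * (1 - 9 * ε / 2) / (1 / 4 + 7 * ε / 8) := by
    rw [l4, ha', hα', eq_div_iff hne2, sub_mul, mul_assoc, div_mul_cancel₀ _ hne2]
    ring
  refine ⟨?_, key, ?_⟩
  · intro I hI
    rcases indep_classify I hI with h|h|h|h|h|h|h|h|h|h <;> subst h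
    · rw [nb0]; simp [l0, l1, l2]; linarith
    · rw [nb1]; simp [l0, l1, l3]; linarith
    · rw [nb2]; simp [l0, l2, l4]; linarith
    · rw [nb3]; simp [l1, l3, l4]; linarith
    · rw [nb4]; simp [l2, l3, l4]; linarith
    · rw [nb03]; simp [l0, l1, l2, l3, l4]; linarith
    · rw [nb04]; simp [l0, l1, l2, l3, l4]; linarith
    · rw [nb12]; simp [l0, l1, l2, l3, l4]; linarith
    · rw [nb14]; simp [l0, l1, l2, l3, l4]; linarith
    · rw [nb23]; simp [l0, l1, l2, l3, l4]; linarith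
  · rw [key]
    apply div_nonneg _ (le_of_lt e2)
    apply mul_nonneg <;> linarith
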